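/- Let 𝓜 be a nonempty, convex, compact set of real symmetric positive semidefinite d×d matrices, and define V(M) = sup_{δ ∈ ℝ^d, ‖δ‖ ≤ 1} δᵀ M δ (which equals λ_max(M)). Assume that every minimizer M* of V over 𝓜 has a simple largest eigenvalue, i.e. the eigenspace { v : M* v = V(M*) v } is one-dimensional. Then the rank-one-constrained max–min and min–max values coincide: sup_{‖δ‖ ≤ 1} inf_{M ∈ 𝓜} δᵀ M δ = inf_{M ∈ 𝓜} sup_{‖δ‖ ≤ 1} δᵀ M δ. (Value-equality form of Theorem 2, part 1.) -/

import Mathlib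

open Matrix

section UadGameAux

variable {d : ℕ}

noncomputable def toCLM (A : Matrix (Fin d) (Fin d) ℝ) :
    EuclideanSpace ℝ (Fin d) →L[ℝ] EuclideanSpace ℝ (Fin d) :=
  LinearMap.toContinuousLinearMap (Matrix.toEuclideanLin A)

lemma inner_eq_dot (x y : EuclideanSpace ℝ (Fin d)) :
    (inner ℝ x y : ℝ) = x ⬝ᵥ y := by
  simp [PiLp.inner_apply, dotProduct, mul_comm]

lemma toCLM_coords (A : Matrix (Fin d) (Fin d) ℝ) (x : EuclideanSpace ℝ (Fin d)) (i : Fin d) :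
    toCLM A x i = A.mulVec x i := by
  simp [toCLM, Matrix.toEuclideanLin_apply]

lemma dot_toCLM (A : Matrix (Fin d) (Fin d) ℝ) (x y : EuclideanSpace ℝ (Fin d)) :
    (inner ℝ x (toCLM A y) : ℝ) = x ⬝ᵥ A.mulVec y := by
  rw [inner_eq_dot]
  simp [dotProduct, toCLM_coords]

lemma dot_le (A : Matrix (Fin d) (Fin d) ℝ) (x y : EuclideanSpace ℝ (Fin d)) :
    |x ⬝ᵥ A.mulVec y| ≤ ‖toCLM A‖ * ‖x‖ * ‖y‖ := by
  rw [← dot_toCLM]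
  calc |(inner ℝ x (toCLM A y) : ℝ)| ≤ ‖x‖ * ‖toCLM A y‖ := abs_real_inner_le_norm _ _
    _ ≤ ‖x‖ * (‖toCLM A‖ * ‖y‖) :=
        mul_le_mul_of_nonneg_left ((toCLM A).le_opNorm y) (norm_nonneg x)
    _ = ‖toCLM A‖ * ‖x‖ * ‖y‖ := by ring

lemma dot_self_eq (x : EuclideanSpace ℝ (Fin d)) : x ⬝ᵥ x = ‖x‖ ^ 2 := by
  rw [← inner_eq_dot, real_inner_self_eq_norm_sq]

lemma qcont (M : Matrix (Fin d) (Fin d) ℝ) :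
    Continuous fun δ : EuclideanSpace ℝ (Fin d) => δ ⬝ᵥ M.mulVec δ := by
  have : (fun δ : EuclideanSpace ℝ (Fin d) => δ ⬝ᵥ M.mulVec δ)
      = fun δ => (inner ℝ δ (toCLM M δ) : ℝ) := by
    funext δ; rw [dot_toCLM]
  rw [this]
  exact continuous_id.inner (toCLM M).continuous

def qLinMap (δ : EuclideanSpace ℝ (Fin d)) : Matrix (Fin d) (Fin d) ℝ →ₗ[ℝ] ℝ where
  toFun := fun M : Matrix (Fin d) (Fin d) ℝ => δ ⬝ᵥ M.mulVec δ
  map_add' := by intro M N; simp [Matrix.add_mulVec, dotProduct_add]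
  map_smul' := by intro c M; simp [Matrix.smul_mulVec, dotProduct_smul, smul_eq_mul]

lemma qlin (δ : EuclideanSpace ℝ (Fin d)) :
    Continuous fun M : Matrix (Fin d) (Fin d) ℝ => δ ⬝ᵥ M.mulVec δ :=
  (qLinMap δ).continuous_of_finiteDimensional

lemma toCLMcont : Continuous (toCLM (d := d)) :=
  LinearMap.continuous_of_finiteDimensional
    (((Matrix.toEuclideanLin (𝕜 := ℝ) (m := Fin d) (n := Fin d)).trans
      LinearMap.toContinuousLinearMap).toLinearMap)

lemma dot_symm {A : Matrix (Fin d) (Fin d) ℝ} (hA : A.IsHermitian)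
    (x y : Fin d → ℝ) : x ⬝ᵥ A.mulVec y = y ⬝ᵥ A.mulVec x := by
  rw [Matrix.dotProduct_mulVec, ← Matrix.mulVec_transpose]
  have : Aᵀ = A := by
    have := hA.eq
    rwa [Matrix.conjTranspose_eq_transpose_of_trivial] at this
  rw [this, dotProduct_comm]

lemma q_smul (A : Matrix (Fin d) (Fin d) ℝ) (c : ℝ) (x : EuclideanSpace ℝ (Fin d)) :
    (c • x) ⬝ᵥ A.mulVec ((c • x : EuclideanSpace ℝ (Fin d))) = c ^ 2 * (x ⬝ᵥ A.mulVec x) := by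
  have h1 : A.mulVec (c • x) = c • A.mulVec x := by
    funext i
    simp [Matrix.mulVec, dotProduct, Finset.mul_sum, mul_comm, mul_left_comm, mul_assoc]
  rw [show ((c • x : EuclideanSpace ℝ (Fin d)) : Fin d → ℝ) ⬝ᵥ A.mulVec ((c • x : EuclideanSpace ℝ (Fin d)))
      = (c • (x : Fin d → ℝ)) ⬝ᵥ (c • A.mulVec x) from by rw [WithLp.ofLp_smul, h1],
    smul_dotProduct, dotProduct_smul, smul_eq_mul, smul_eq_mul]
  ring

lemma eig_of_max {Mstar : Matrix (Fin d) (Fin d) ℝ} (hH : Mstar.IsHermitian)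
    {lam : ℝ} (hlam : 0 < lam) {x : EuclideanSpace ℝ (Fin d)}
    (hmax : ∀ δ : EuclideanSpace ℝ (Fin d), ‖δ‖ ≤ 1 → δ ⬝ᵥ Mstar.mulVec δ ≤ lam)
    (hx : ‖x‖ ≤ 1) (hval : x ⬝ᵥ Mstar.mulVec x = lam) :
    ‖x‖ = 1 ∧ Mstar.mulVec x = lam • (x : Fin d → ℝ) := by
  have hx0 : x ≠ 0 := by
    rintro rfl
    rw [show ((0 : EuclideanSpace ℝ (Fin d)) : Fin d → ℝ) ⬝ᵥ Mstar.mulVec ((0 : EuclideanSpace ℝ (Fin d))) = 0 from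
      zero_dotProduct _] at hval
    linarith
  have hxpos : 0 < ‖x‖ := norm_pos_iff.mpr hx0
  have hn1 : ‖x‖ = 1 := by
    by_contra h
    have hlt : ‖x‖ < 1 := lt_of_le_of_ne hx h
    set c := ‖x‖⁻¹ with hcdef
    have hcx : c * ‖x‖ = 1 := inv_mul_cancel₀ hxpos.ne'
    have hc0 : 0 < c := inv_pos.mpr hxpos
    have hc1 : 1 < c := by nlinarith
    have hnu : ‖c • x‖ = 1 := by
      rw [norm_smul, Real.norm_eq_abs, abs_of_pos hc0, hcx]
    have hq : c ^ 2 * lam ≤ lam := by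
      have h' := hmax (c • x) (le_of_eq hnu)
      rwa [q_smul, hval] at h'
    nlinarith [mul_pos (mul_pos (sub_pos.mpr hc1) (by linarith : (0:ℝ) < c + 1)) hlam]
  refine ⟨hn1, ?_⟩
  have hsym : IsSelfAdjoint (toCLM Mstar) := by
    rw [ContinuousLinearMap.isSelfAdjoint_iff_isSymmetric]
    have := (Matrix.isHermitian_iff_isSymmetric).mp hH
    simpa [toCLM] using this
  have hre : ∀ y : EuclideanSpace ℝ (Fin d),
      (toCLM Mstar).reApplyInnerSelf y = y ⬝ᵥ Mstar.mulVec y := by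
    intro y
    rw [ContinuousLinearMap.reApplyInnerSelf, ← dot_toCLM, real_inner_comm]
    rfl
  have hextr : IsMaxOn (toCLM Mstar).reApplyInnerSelf (Metric.sphere (0:EuclideanSpace ℝ (Fin d)) ‖x‖) x := by
    intro y hy
    have hyn : ‖y‖ = ‖x‖ := by simpa [mem_sphere_zero_iff_norm] using hy
    simp only [Set.mem_setOf_eq, hre]
    rw [hval]
    exact hmax y (by rw [hyn, hn1])
  have heig := hsym.hasEigenvector_of_isLocalExtrOn hx0 (Or.inr hextr.localize)
  have hray : (toCLM Mstar).rayleighQuotient x = lam := by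
    rw [ContinuousLinearMap.rayleighQuotient, hre, hval, hn1]
    norm_num
  rw [hray] at heig
  have hmem := Module.End.mem_eigenspace_iff.mp heig.1
  funext i
  have := congrFun (congrArg (fun z : EuclideanSpace ℝ (Fin d) => (z : Fin d → ℝ)) hmem) i
  simpa [toCLM_coords] using this

lemma dot_expand (A : Matrix (Fin d) (Fin d) ℝ) (a : ℝ) (v w : Fin d → ℝ) :
    (a • v + w) ⬝ᵥ A.mulVec (a • v + w)
      = a ^ 2 * (v ⬝ᵥ A.mulVec v) + a * (v ⬝ᵥ A.mulVec w)
        + a * (w ⬝ᵥ A.mulVec v) + w ⬝ᵥ A.mulVec w := by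
  rw [Matrix.mulVec_add, Matrix.mulVec_smul, add_dotProduct, smul_dotProduct,
    dotProduct_add, dotProduct_add, dotProduct_smul, dotProduct_smul,
    smul_eq_mul, smul_eq_mul, smul_eq_mul]
  ring

lemma dot_expand_self (a : ℝ) (v w : Fin d → ℝ) :
    (a • v + w) ⬝ᵥ (a • v + w)
      = a ^ 2 * (v ⬝ᵥ v) + a * (v ⬝ᵥ w) + a * (w ⬝ᵥ v) + w ⬝ᵥ w := by
  simp only [add_dotProduct, dotProduct_add, smul_dotProduct,
    dotProduct_smul, smul_eq_mul]
  ring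

lemma toCLM_zero : toCLM (0 : Matrix (Fin d) (Fin d) ℝ) = 0 := by
  unfold toCLM; rw [map_zero, map_zero]

lemma toCLM_neg (A : Matrix (Fin d) (Fin d) ℝ) : toCLM (-A) = -(toCLM A) := by
  unfold toCLM; rw [map_neg, map_neg]

lemma mem_eig {M : Matrix (Fin d) (Fin d) ℝ} {lam : ℝ} {x : EuclideanSpace ℝ (Fin d)}
    (h : M.mulVec x = lam • (x : Fin d → ℝ)) :
    (x : Fin d → ℝ) ∈ Module.End.eigenspace (Matrix.toLin' M) lam :=
  Module.End.mem_eigenspace_iff.mpr (by simpa [Matrix.toLin'_apply] using h)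


end UadGameAux

set_option maxHeartbeats 1000000 in

/-- **Theorem 2, part 1 (value-equality form).** For a nonempty convex compact set `𝓜` of
real symmetric PSD matrices, with `V(M) = sup_{‖δ‖ ≤ 1} δᵀMδ`, if every minimizer of `V`
over `𝓜` has a simple largest eigenvalue then
`sup_{‖δ‖ ≤ 1} inf_{M ∈ 𝓜} δᵀMδ = inf_{M ∈ 𝓜} sup_{‖δ‖ ≤ 1} δᵀMδ`. -/
theorem uad_game_value_equality_of_simple_top_eigenvalue
    {d : ℕ} (𝓜 : Set (Matrix (Fin d) (Fin d) ℝ))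
    (hne : 𝓜.Nonempty) (hconv : Convex ℝ 𝓜) (hcpt : IsCompact 𝓜)
    (hpsd : ∀ M ∈ 𝓜, M.PosSemidef)
    (V : Matrix (Fin d) (Fin d) ℝ → ℝ)
    (hV : ∀ M, V M =
      sSup ((fun δ : EuclideanSpace ℝ (Fin d) => δ ⬝ᵥ M.mulVec δ) ''
        {δ : EuclideanSpace ℝ (Fin d) | ‖δ‖ ≤ 1}))
    (hsimple : ∀ Mstar ∈ 𝓜, (∀ M ∈ 𝓜, V Mstar ≤ V M) →
      Module.finrank ℝ (Module.End.eigenspace (Matrix.toLin' Mstar) (V Mstar)) = 1) :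
    sSup ((fun δ : EuclideanSpace ℝ (Fin d) =>
        sInf ((fun M => δ ⬝ᵥ M.mulVec δ) '' 𝓜)) ''
        {δ : EuclideanSpace ℝ (Fin d) | ‖δ‖ ≤ 1}) =
      sInf ((fun M => sSup ((fun δ : EuclideanSpace ℝ (Fin d) => δ ⬝ᵥ M.mulVec δ) ''
        {δ : EuclideanSpace ℝ (Fin d) | ‖δ‖ ≤ 1})) '' 𝓜) := by
  classical
  -- notation
  set B : Set (EuclideanSpace ℝ (Fin d)) := {δ : EuclideanSpace ℝ (Fin d) | ‖δ‖ ≤ 1} with hBdef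
  set g : EuclideanSpace ℝ (Fin d) → ℝ :=
    fun δ : EuclideanSpace ℝ (Fin d) => sInf ((fun M => δ ⬝ᵥ M.mulVec δ) '' 𝓜) with hgdef
  have hVfun : (fun M : Matrix (Fin d) (Fin d) ℝ =>
      sSup ((fun δ : EuclideanSpace ℝ (Fin d) => δ ⬝ᵥ M.mulVec δ) '' B)) = V :=
    funext fun M => (hV M).symm
  rw [hVfun]
  -- basic facts about B
  have hBcb : B = Metric.closedBall (0 : EuclideanSpace ℝ (Fin d)) 1 := by
    ext δ; simp [hBdef, Metric.mem_closedBall, dist_zero_right]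
  have hBcpt : IsCompact B := by rw [hBcb]; exact isCompact_closedBall 0 1
  have hB0 : (0 : EuclideanSpace ℝ (Fin d)) ∈ B := by simp [hBdef]
  have hBne : B.Nonempty := ⟨0, hB0⟩
  have hmemB : ∀ δ : EuclideanSpace ℝ (Fin d), ‖δ‖ ≤ 1 → δ ∈ B := fun δ h => h
  -- V as an upper bound / least upper bound
  have hVub : ∀ (M : Matrix (Fin d) (Fin d) ℝ) (δ : EuclideanSpace ℝ (Fin d)),
      δ ∈ B → δ ⬝ᵥ M.mulVec δ ≤ V M := by
    intro M δ hδ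
    rw [hV M]
    exact le_csSup ((hBcpt.image (qcont M)).bddAbove) ⟨δ, hδ, rfl⟩
  have hVle : ∀ (M : Matrix (Fin d) (Fin d) ℝ) (c : ℝ),
      (∀ δ ∈ B, δ ⬝ᵥ M.mulVec δ ≤ c) → V M ≤ c := by
    intro M c h
    rw [hV M]
    exact csSup_le (hBne.image _) (by rintro x ⟨δ, hδ, rfl⟩; exact h δ hδ)
  -- properties of g
  have hgle : ∀ δ ∈ B, ∀ M ∈ 𝓜, g δ ≤ δ ⬝ᵥ M.mulVec δ := by
    intro δ _ M hM
    exact csInf_le ((hcpt.image (qlin δ)).bddBelow) ⟨M, hM, rfl⟩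
  have hgge : ∀ (δ : EuclideanSpace ℝ (Fin d)) (c : ℝ),
      (∀ M ∈ 𝓜, c ≤ δ ⬝ᵥ M.mulVec δ) → c ≤ g δ := by
    intro δ c h
    exact le_csInf (hne.image _) (by rintro x ⟨M, hM, rfl⟩; exact h M hM)
  -- weak duality
  have hweak : ∀ δ ∈ B, g δ ≤ sInf (V '' 𝓜) := by
    intro δ hδ
    refine le_csInf (hne.image V) ?_
    rintro x ⟨M, hM, rfl⟩
    exact (hgle δ hδ M hM).trans (hVub M δ hδ)
  have hgBdd : BddAbove (g '' B) := by
    refine ⟨sInf (V '' 𝓜), ?_⟩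
    rintro x ⟨δ, hδ, rfl⟩
    exact hweak δ hδ
  have hLHSle : sSup (g '' B) ≤ sInf (V '' 𝓜) :=
    csSup_le (hBne.image g) (by rintro x ⟨δ, hδ, rfl⟩; exact hweak δ hδ)
  -- continuity of V
  have hkey : ∀ M N : Matrix (Fin d) (Fin d) ℝ, V M ≤ V N + ‖toCLM (M - N)‖ := by
    intro M N
    refine hVle M _ ?_
    intro δ hδ
    have hδ1 : ‖δ‖ ≤ 1 := hδ
    have h1 : δ ⬝ᵥ N.mulVec δ ≤ V N := hVub N δ hδ
    have h2 : |δ ⬝ᵥ (M - N).mulVec δ| ≤ ‖toCLM (M - N)‖ := by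
      have h := dot_le (M - N) δ δ
      have hn : (0:ℝ) ≤ ‖toCLM (M - N)‖ := norm_nonneg _
      have hdd : ‖δ‖ * ‖δ‖ ≤ 1 := mul_le_one₀ hδ1 (norm_nonneg δ) hδ1
      have h5 := mul_le_mul_of_nonneg_left hdd hn
      calc |δ ⬝ᵥ (M - N).mulVec δ| ≤ ‖toCLM (M - N)‖ * ‖δ‖ * ‖δ‖ := h
        _ = ‖toCLM (M - N)‖ * (‖δ‖ * ‖δ‖) := by ring
        _ ≤ ‖toCLM (M - N)‖ * 1 := h5
        _ = ‖toCLM (M - N)‖ := by ring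
    have h3 : δ ⬝ᵥ M.mulVec δ = δ ⬝ᵥ N.mulVec δ + δ ⬝ᵥ (M - N).mulVec δ := by
      rw [Matrix.sub_mulVec, dotProduct_sub]; ring
    have := abs_le.mp h2
    linarith [this.2]
  have hVcont : Continuous V := by
    rw [continuous_iff_continuousAt]
    intro N
    have hnc : Continuous fun M : Matrix (Fin d) (Fin d) ℝ => ‖toCLM (M - N)‖ :=
      (toCLMcont.comp (continuous_id.sub continuous_const)).norm
    have h00 : (fun M : Matrix (Fin d) (Fin d) ℝ => ‖toCLM (M - N)‖) N = 0 := by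
      simp only [sub_self, toCLM_zero, norm_zero]
    have hzero : Filter.Tendsto (fun M : Matrix (Fin d) (Fin d) ℝ => ‖toCLM (M - N)‖)
        (nhds N) (nhds 0) := h00 ▸ (hnc.tendsto N)
    have hlow : Filter.Tendsto (fun M => V N - ‖toCLM (M - N)‖) (nhds N) (nhds (V N)) := by
      simpa only [sub_zero] using tendsto_const_nhds.sub hzero
    have hhigh : Filter.Tendsto (fun M => V N + ‖toCLM (M - N)‖) (nhds N) (nhds (V N)) := by
      simpa only [add_zero] using tendsto_const_nhds.add hzero
    refine tendsto_of_tendsto_of_tendsto_of_le_of_le hlow hhigh ?_ ?_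
    · intro M
      have := hkey N M
      have he : ‖toCLM (N - M)‖ = ‖toCLM (M - N)‖ := by
        rw [show N - M = -(M - N) from (neg_sub M N).symm, toCLM_neg, norm_neg]
      simp only
      linarith [he ▸ this]
    · intro M
      exact hkey M N
  -- minimizer of V
  obtain ⟨Mstar, hMstar, hMstarmin⟩ := hcpt.exists_isMinOn hne hVcont.continuousOn
  have hmin : ∀ M ∈ 𝓜, V Mstar ≤ V M := fun M hM => hMstarmin hM
  set lam := V Mstar with hlamdef
  have hRHS : sInf (V '' 𝓜) = lam :=
    IsLeast.csInf_eq ⟨⟨Mstar, hMstar, rfl⟩, by rintro x ⟨M, hM, rfl⟩; exact hmin M hM⟩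
  -- it suffices to show lam ≤ LHS
  rw [hRHS] at hLHSle ⊢
  refine le_antisymm hLHSle ?_
  have hlam0 : 0 ≤ lam := by
    have := hVub Mstar 0 hB0
    rwa [show ((0 : EuclideanSpace ℝ (Fin d)) : Fin d → ℝ) ⬝ᵥ Mstar.mulVec ((0 : EuclideanSpace ℝ (Fin d))) = 0 from
      zero_dotProduct _] at this
  rcases eq_or_lt_of_le hlam0 with hlam | hlam
  · -- lam = 0 : take δ = 0
    have hg0 : lam ≤ g 0 := by
      refine hgge 0 lam ?_
      intro M hM
      rw [show ((0 : EuclideanSpace ℝ (Fin d)) : Fin d → ℝ) ⬝ᵥ M.mulVec ((0 : EuclideanSpace ℝ (Fin d))) = 0 from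
        zero_dotProduct _, ← hlam]
    exact hg0.trans (le_csSup hgBdd ⟨0, hB0, rfl⟩)
  · -- lam > 0 : the interesting case
    have hHstar : Mstar.IsHermitian := (hpsd Mstar hMstar).1
    have hmaxq : ∀ δ : EuclideanSpace ℝ (Fin d), ‖δ‖ ≤ 1 → δ ⬝ᵥ Mstar.mulVec δ ≤ lam :=
      fun δ h => hVub Mstar δ h
    obtain ⟨δ0, hδ0B, hδ0max⟩ := hBcpt.exists_isMaxOn hBne (qcont Mstar).continuousOn
    have hδ0val : δ0 ⬝ᵥ Mstar.mulVec δ0 = lam := by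
      have hgr : IsGreatest ((fun δ : EuclideanSpace ℝ (Fin d) => δ ⬝ᵥ Mstar.mulVec δ) '' B)
          (δ0 ⬝ᵥ Mstar.mulVec δ0) :=
        ⟨⟨δ0, hδ0B, rfl⟩, by rintro y ⟨δ, hδ, rfl⟩; exact hδ0max hδ⟩
      have : lam = sSup ((fun δ : EuclideanSpace ℝ (Fin d) => δ ⬝ᵥ Mstar.mulVec δ) '' B) := by
        rw [hlamdef]; exact hV Mstar
      rw [this, hgr.csSup_eq]
    obtain ⟨hδ0n, hδ0eig⟩ := eig_of_max hHstar hlam hmaxq hδ0B hδ0val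
    have hδ0ne : δ0 ≠ 0 := by
      intro h; rw [h, norm_zero] at hδ0n; exact one_ne_zero hδ0n.symm
    -- the orthogonal section and the spectral gap
    set K : Set (EuclideanSpace ℝ (Fin d)) :=
      B ∩ {δ : EuclideanSpace ℝ (Fin d) | δ0 ⬝ᵥ δ = 0} with hKdef
    have hKcpt : IsCompact K := by
      apply hBcpt.inter_right
      have hcont : Continuous fun δ : EuclideanSpace ℝ (Fin d) => δ0 ⬝ᵥ δ := by
        have : (fun δ : EuclideanSpace ℝ (Fin d) => δ0 ⬝ᵥ δ)
            = fun δ : EuclideanSpace ℝ (Fin d) => (inner ℝ δ0 δ : ℝ) := by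
          funext δ; rw [inner_eq_dot]
        rw [this]
        exact continuous_const.inner continuous_id
      exact isClosed_eq hcont continuous_const
    have hK0 : (0 : EuclideanSpace ℝ (Fin d)) ∈ K :=
      ⟨hB0, by simp [dotProduct_zero]⟩
    obtain ⟨w0, hw0K, hw0max⟩ := hKcpt.exists_isMaxOn ⟨0, hK0⟩ (qcont Mstar).continuousOn
    set mu := w0 ⬝ᵥ Mstar.mulVec w0 with hmudef
    have hmu0 : 0 ≤ mu := by
      have := (hpsd Mstar hMstar).dotProduct_mulVec_nonneg w0
      simpa using this
    have hmulam : mu ≤ lam := hmaxq w0 hw0K.1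
    have hmult : mu < lam := by
      rcases lt_or_eq_of_le hmulam with h | he
      · exact h
      exfalso
      obtain ⟨hw0n, hw0eig⟩ := eig_of_max hHstar hlam hmaxq hw0K.1 he
      have hfr := hsimple Mstar hMstar hmin
      obtain ⟨u, hu0, hu⟩ := finrank_eq_one_iff'.mp hfr
      obtain ⟨aa, haa⟩ := hu ⟨(δ0 : Fin d → ℝ), mem_eig hδ0eig⟩
      obtain ⟨bb, hbb⟩ := hu ⟨(w0 : Fin d → ℝ), mem_eig hw0eig⟩
      have haa' : (δ0 : Fin d → ℝ) = aa • (u : Fin d → ℝ) := by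
        have h := congrArg Subtype.val haa
        simpa using h.symm
      have hbb' : (w0 : Fin d → ℝ) = bb • (u : Fin d → ℝ) := by
        have h := congrArg Subtype.val hbb
        simpa using h.symm
      have huu : (u : Fin d → ℝ) ⬝ᵥ (u : Fin d → ℝ) ≠ 0 := by
        rw [Ne, dotProduct_self_eq_zero]
        exact fun h => hu0 (Submodule.coe_eq_zero.mp h)
      have haane : aa ≠ 0 := by
        intro h
        rw [h, zero_smul] at haa'
        rw [haa', zero_dotProduct] at hδ0val
        linarith
      have hbbne : bb ≠ 0 := by
        intro h
        rw [h, zero_smul] at hbb'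
        have h0 : mu = 0 := by rw [hmudef, hbb', zero_dotProduct]
        linarith
      have hdot0 : (δ0 : Fin d → ℝ) ⬝ᵥ (w0 : Fin d → ℝ) = 0 := hw0K.2
      rw [haa', hbb', smul_dotProduct, dotProduct_smul, smul_eq_mul,
        smul_eq_mul] at hdot0
      rcases mul_eq_zero.mp hdot0 with h | h
      · exact haane h
      rcases mul_eq_zero.mp h with h' | h'
      · exact hbbne h'
      · exact huu h'
    -- main claim : δ0 is robust against every M ∈ 𝓜
    have hclaim : ∀ M ∈ 𝓜, lam ≤ δ0 ⬝ᵥ M.mulVec δ0 := by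
      intro M hM
      by_contra hcon
      push_neg at hcon
      set ε := lam - δ0 ⬝ᵥ M.mulVec δ0 with hεdef
      have hε : 0 < ε := sub_pos.mpr hcon
      set D := M - Mstar with hDdef
      set C := ‖toCLM D‖ with hCdef
      have hC0 : (0:ℝ) ≤ C := norm_nonneg _
      have hqDv : δ0 ⬝ᵥ D.mulVec δ0 = -ε := by
        rw [hDdef, Matrix.sub_mulVec, dotProduct_sub, hδ0val, hεdef]
        ring
      have hCpos : (0:ℝ) < C := by
        rcases lt_or_eq_of_le hC0 with h | h
        · exact h
        exfalso
        have hb := dot_le D δ0 δ0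
        rw [hqDv, hδ0n, abs_neg, abs_of_pos hε] at hb
        have := hCdef
        linarith
      set c := lam - mu with hcdef
      have hc : 0 < c := sub_pos.mpr hmult
      clear_value ε C c
      obtain ⟨t, ht0, ht1, hte, ht9⟩ :
          ∃ t : ℝ, 0 < t ∧ t ≤ 1 ∧ t * ε ≤ c / 2 ∧ 9 * t * C^2 ≤ ε * c := by
        refine ⟨min (ε * c / (9 * C^2)) (min (c / (2*ε)) 1),
          lt_min (by positivity) (lt_min (by positivity) one_pos),
          le_trans (min_le_right _ _) (min_le_right _ _), ?_, ?_⟩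
        · have h1 : min (ε * c / (9 * C^2)) (min (c / (2*ε)) 1) ≤ c/(2*ε) :=
            le_trans (min_le_right _ _) (min_le_left _ _)
          have h2 := mul_le_mul_of_nonneg_right h1 hε.le
          have h3 : c/(2*ε) * ε = c/2 := by field_simp
          linarith
        · have h1 : min (ε * c / (9 * C^2)) (min (c / (2*ε)) 1) ≤ ε * c/(9*C^2) :=
            min_le_left _ _
          have h9 : (0:ℝ) < 9*C^2 := by positivity
          have h2 := mul_le_mul_of_nonneg_right h1 h9.le
          have h3 : ε*c/(9*C^2)*(9*C^2) = ε*c := by field_simp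
          nlinarith
      set Mt := Mstar + t • D with hMtdef
      have hMt : Mt ∈ 𝓜 := by
        have h := hconv hMstar hM (by linarith : (0:ℝ) ≤ 1 - t) ht0.le (by ring)
        have he : (1-t) • Mstar + t • M = Mt := by
          rw [hMtdef, hDdef, smul_sub, sub_smul, one_smul]
          abel
        rwa [he] at h
      clear_value Mt
      have hcval : c = lam - mu := hcdef
      have hta : (0:ℝ) ≤ lam - t * ε := by
        linarith only [hte, hcval, hmu0, hlam0]
      -- pointwise estimate on the ball
      have hest : ∀ δ ∈ B, δ ⬝ᵥ Mt.mulVec δ ≤ lam - t*ε/2 := by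
        intro δ hδB
        have hδ1 : ‖δ‖ ≤ 1 := hδB
        set a := δ0 ⬝ᵥ (δ : Fin d → ℝ) with hadef
        set w : EuclideanSpace ℝ (Fin d) := δ - a • δ0 with hwdef
        set s := ‖w‖ with hsdef
        have hs0 : (0:ℝ) ≤ s := norm_nonneg w
        have hvv : δ0 ⬝ᵥ (δ0 : Fin d → ℝ) = 1 := by
          rw [dot_self_eq, hδ0n]; norm_num
        have hwfun : (w : Fin d → ℝ) = (δ : Fin d → ℝ) - a • (δ0 : Fin d → ℝ) := by
          funext i
          simp [hwdef, PiLp.sub_apply, PiLp.smul_apply]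
        have hδw : (δ : Fin d → ℝ) = a • (δ0 : Fin d → ℝ) + (w : Fin d → ℝ) := by
          rw [hwfun]
          funext i
          simp [Pi.add_apply, Pi.smul_apply, Pi.sub_apply]
        have horth : δ0 ⬝ᵥ (w : Fin d → ℝ) = 0 := by
          rw [hwfun, dotProduct_sub, dotProduct_smul, hvv, hadef, smul_eq_mul]
          ring
        have horth' : (w : Fin d → ℝ) ⬝ᵥ (δ0 : Fin d → ℝ) = 0 := by
          rw [dotProduct_comm]; exact horth
        have hwdot : (w : Fin d → ℝ) ⬝ᵥ (w : Fin d → ℝ) = s^2 := dot_self_eq w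
        clear_value a
        have hpyth : a^2 + s^2 ≤ 1 := by
          have hnd : (δ : Fin d → ℝ) ⬝ᵥ (δ : Fin d → ℝ) = ‖δ‖^2 := dot_self_eq δ
          have hexp : (δ : Fin d → ℝ) ⬝ᵥ (δ : Fin d → ℝ) = a^2 + s^2 := by
            conv_lhs => rw [hδw]
            rw [dot_expand_self, hvv, horth, horth', hwdot]
            ring
          nlinarith only [hexp, hnd, hδ1, norm_nonneg δ]
        have hs1 : s ≤ 1 := by nlinarith only [hpyth, hs0, sq_nonneg a]
        have habs : |a| ≤ 1 := by
          nlinarith only [sq_abs a, abs_nonneg a, hpyth, sq_nonneg s]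
        -- Mstar part
        have hqw : (w : Fin d → ℝ) ⬝ᵥ Mstar.mulVec w ≤ mu * s^2 := by
          rcases eq_or_ne w (0 : EuclideanSpace ℝ (Fin d)) with h0 | h0
          · have hz : (w : Fin d → ℝ) = 0 := by rw [h0]; rfl
            have hsz : s = 0 := by rw [hsdef, h0, norm_zero]
            rw [hz, zero_dotProduct, hsz]
            norm_num
          · have hwpos : 0 < ‖w‖ := norm_pos_iff.mpr h0
            set uu : EuclideanSpace ℝ (Fin d) := ‖w‖⁻¹ • w with huudef
            have hun : ‖uu‖ = 1 := by
              rw [huudef, norm_smul, Real.norm_eq_abs, abs_of_pos (inv_pos.mpr hwpos),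
                inv_mul_cancel₀ hwpos.ne']
            have huufun : (uu : Fin d → ℝ) = ‖w‖⁻¹ • (w : Fin d → ℝ) := by
              funext i; simp [huudef, PiLp.smul_apply]
            have horthu : δ0 ⬝ᵥ (uu : Fin d → ℝ) = 0 := by
              rw [huufun, dotProduct_smul, horth, smul_zero]
            have huK : uu ∈ K := ⟨le_of_eq hun, horthu⟩
            have hqu : uu ⬝ᵥ Mstar.mulVec uu ≤ mu := hw0max huK
            have hwu : w = ‖w‖ • uu := by
              rw [huudef, smul_smul, mul_inv_cancel₀ hwpos.ne', one_smul]
            have hqsc := q_smul Mstar ‖w‖ uu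
            rw [← hwu] at hqsc
            rw [hqsc, hsdef]
            linarith only [mul_le_mul_of_nonneg_left hqu (sq_nonneg ‖w‖)]
        have hqMs : (δ : Fin d → ℝ) ⬝ᵥ Mstar.mulVec δ ≤ a^2 * lam + mu * s^2 := by
          have hcross2 : (w : Fin d → ℝ) ⬝ᵥ Mstar.mulVec δ0 = 0 := by
            rw [hδ0eig, dotProduct_smul, horth', smul_eq_mul, mul_zero]
          have hcross1 : (δ0 : Fin d → ℝ) ⬝ᵥ Mstar.mulVec w = 0 := by
            rw [dot_symm hHstar δ0 w]
            exact hcross2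
          rw [hδw, dot_expand, hδ0val, hcross1, hcross2]
          linarith only [hqw]
        -- D part
        have hcd1 : |(δ0 : Fin d → ℝ) ⬝ᵥ D.mulVec w| ≤ C * s := by
          have h := dot_le D δ0 w
          rw [hδ0n, mul_one, ← hCdef, ← hsdef] at h
          exact h
        have hcd2 : |(w : Fin d → ℝ) ⬝ᵥ D.mulVec δ0| ≤ C * s := by
          have h := dot_le D w δ0
          rw [hδ0n, mul_one, ← hCdef, ← hsdef] at h
          exact h
        have hcd3 : |(w : Fin d → ℝ) ⬝ᵥ D.mulVec w| ≤ C * s^2 := by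
          have h := dot_le D w w
          rw [← hCdef, ← hsdef] at h
          have he : C * s * s = C * s^2 := by ring
          linarith only [h, he]
        have hqD : (δ : Fin d → ℝ) ⬝ᵥ D.mulVec δ ≤ -ε*a^2 + 2*(C*s) + C*s^2 := by
          rw [hδw, dot_expand, hqDv]
          have h1 : a * ((δ0 : Fin d → ℝ) ⬝ᵥ D.mulVec w) ≤ C*s :=
            calc a * ((δ0 : Fin d → ℝ) ⬝ᵥ D.mulVec w) ≤ |a * ((δ0 : Fin d → ℝ) ⬝ᵥ D.mulVec w)| :=
                  le_abs_self _
              _ = |a| * |(δ0 : Fin d → ℝ) ⬝ᵥ D.mulVec w| := abs_mul _ _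
              _ ≤ 1 * (C*s) := mul_le_mul habs hcd1 (abs_nonneg _) zero_le_one
              _ = C*s := one_mul _
          have h2 : a * ((w : Fin d → ℝ) ⬝ᵥ D.mulVec δ0) ≤ C*s :=
            calc a * ((w : Fin d → ℝ) ⬝ᵥ D.mulVec δ0) ≤ |a * ((w : Fin d → ℝ) ⬝ᵥ D.mulVec δ0)| :=
                  le_abs_self _
              _ = |a| * |(w : Fin d → ℝ) ⬝ᵥ D.mulVec δ0| := abs_mul _ _
              _ ≤ 1 * (C*s) := mul_le_mul habs hcd2 (abs_nonneg _) zero_le_one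
              _ = C*s := one_mul _
          have h3 : (w : Fin d → ℝ) ⬝ᵥ D.mulVec w ≤ C*s^2 := le_trans (le_abs_self _) hcd3
          linarith only [h1, h2, h3]
        -- combine
        have hqMt : (δ : Fin d → ℝ) ⬝ᵥ Mt.mulVec δ
            = (δ : Fin d → ℝ) ⬝ᵥ Mstar.mulVec δ + t * ((δ : Fin d → ℝ) ⬝ᵥ D.mulVec δ) := by
          rw [hMtdef, Matrix.add_mulVec, dotProduct_add, Matrix.smul_mulVec,
            dotProduct_smul, smul_eq_mul]
        rw [hqMt]
        have e4 : -(c/2)*s^2 + 3*(t*C)*s ≤ t*ε/2 := by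
          have hd : (0:ℝ) ≤ ε*c - 9*t*C^2 := by linarith only [ht9]
          nlinarith only [sq_nonneg (c*s - 3*t*C), mul_nonneg ht0.le hd, hc, mul_pos hc hc]
        have H1 : (lam - t*ε)*a^2 ≤ (lam - t*ε)*(1 - s^2) :=
          mul_le_mul_of_nonneg_left (by linarith only [hpyth]) hta
        have H2 : (t*C)*s^2 ≤ (t*C)*s :=
          mul_le_mul_of_nonneg_left (by nlinarith only [hs0, hs1]) (mul_nonneg ht0.le hC0)
        have H3 : (0:ℝ) ≤ (c/2 - t*ε)*s^2 :=
          mul_nonneg (by linarith only [hte]) (sq_nonneg s)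
        have hcs : c*s^2 = lam*s^2 - mu*s^2 := by rw [hcval]; ring
        linarith only [mul_le_mul_of_nonneg_left hqD ht0.le, hqMs, H1, H2, H3, e4, hcs]
      have hVMt : V Mt ≤ lam - t*ε/2 := hVle Mt _ hest
      have hfin := hmin Mt hMt
      linarith only [hVMt, hfin, mul_pos ht0 hε]
    have hgδ0 : lam ≤ g δ0 := hgge δ0 lam hclaim
    exact hgδ0.trans (le_csSup hgBdd ⟨δ0, hδ0B, rfl⟩)
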